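/- arXiv:1803.03086 — 3 statements merged into one kernel-verified Lean document; each statement's English description precedes it below -/
import Mathlib

section
/- If G is a monoid generated by Σ = {s_1,...,s_d} with relations s_i s_j = s_i whenever A(i,j) = 0 for a d×d binary matrix A, and the subgraph F of the Cayley graph consisting of words ending in their unique right-free generator is finite (G has finite representation), then for every periodic word g = g_1 g_2 ⋯ g_n g_1 (i.e. each consecutive pair g_i g_{i+1} is a valid two-word, A(g_i,g_{i+1})=1, and g_{n+1}=g_1), at least one of g_1,...,g_n is a right free generator (i.e. a generator s_i with A(i,j)=1 for all j). -/
open Matrix Polynomial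

/-- `i → j` is an edge in the digraph of the binary matrix `A`. -/
def adjB {d : ℕ} (A : Fin d → Fin d → Bool) (i j : Fin d) : Prop := A i j = true

/-- `i` is a right free generator: its row of `A` is all ones. -/
def rfB {d : ℕ} (A : Fin d → Fin d → Bool) (i : Fin d) : Prop := ∀ j, A i j = true

/-- The letter at position `s` (0-based) of the word `l` is right free. -/
def rfAt {d : ℕ} (A : Fin d → Fin d → Bool) (l : List (Fin d)) (s : ℕ) : Prop :=
  ∃ h : s < l.length, rfB A (l.get ⟨s, h⟩)

/-- `l` is a based closed walk of length `n` in the digraph of `A`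
(recorded as the list of its `n` vertices, with the closing edge from the
last vertex back to the first). -/
def isClosedWalk {d : ℕ} (A : Fin d → Fin d → Bool) (n : ℕ) (l : List (Fin d)) : Prop :=
  l.length = n ∧ l.Chain' (adjB A) ∧ ∃ h : l ≠ [], adjB A (l.getLast h) (l.head h)

/-- `l` is a based closed walk of length `n` whose unique right free vertex is the last one. -/
def isXiWalk {d : ℕ} (A : Fin d → Fin d → Bool) (n : ℕ) (l : List (Fin d)) : Prop :=
  isClosedWalk A n l ∧ rfAt A l (n - 1) ∧ ∀ k < n - 1, ¬ rfAt A l k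

/-- `ξ_n`: the number of based closed walks of length `n` whose unique right free
vertex is the last one. -/
noncomputable def xiCount {d : ℕ} (A : Fin d → Fin d → Bool) (n : ℕ) : ℕ :=
  {l : List (Fin d) | isXiWalk A n l}.ncard

/-- `G = ⟨Σ | R_A⟩` has a finite representation: there are only finitely many
reduced words containing no right free generator except possibly at the last position. -/
def FiniteRep {d : ℕ} (A : Fin d → Fin d → Bool) : Prop :=
  {l : List (Fin d) | l ≠ [] ∧ l.Chain' (adjB A) ∧ ∀ k < l.length - 1, ¬ rfAt A l k}.Finite

/-- Every cycle in the digraph of `A` passes through a right free vertex. -/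
def CyclesHitRF {d : ℕ} (A : Fin d → Fin d → Bool) : Prop :=
  ∀ l : List (Fin d), l.Chain' (adjB A) →
    (∃ h : l ≠ [], adjB A (l.getLast h) (l.head h)) → ∃ k, rfAt A l k

/-- The 0-1 matrix of `A` with natural number entries. -/
def AmatN {d : ℕ} (A : Fin d → Fin d → Bool) : Matrix (Fin d) (Fin d) ℕ :=
  Matrix.of fun i j => if A i j then 1 else 0

/-- The 0-1 matrix of `A` with real entries. -/
def AmatR {d : ℕ} (A : Fin d → Fin d → Bool) : Matrix (Fin d) (Fin d) ℝ :=
  Matrix.of fun i j => if A i j then 1 else 0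

/-- If the monoid `G = ⟨Σ | R_A⟩` has a finite representation, then
every periodic word (based closed walk in the digraph of `A`) contains at least one
right free generator. -/
theorem cycle_contains_free_generator {d : ℕ} (A : Fin d → Fin d → Bool)
    (hfin : FiniteRep A) (l : List (Fin d)) (hne : l ≠ [])
    (hchain : l.Chain' (adjB A)) (hclose : adjB A (l.getLast hne) (l.head hne)) :
    ∃ k : Fin l.length, rfB A (l.get k) := by
  by_contra hcon
  push_neg at hcon
  have hnrf : ∀ x ∈ l, ¬ rfB A x := by
    intro x hx
    obtain ⟨k, hk⟩ := List.mem_iff_get.mp hx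
    exact hk ▸ hcon k
  have hlen : 0 < l.length := List.length_pos_iff.mpr hne
  -- head? of repeated join
  have hhead : ∀ n : ℕ, ((List.replicate (n+1) l).flatten).head? = some (l.head hne) := by
    intro n
    rw [List.replicate_succ, List.flatten_cons, List.head?_append_of_ne_nil _ hne,
      List.head?_eq_head]
  have hchainrep : ∀ n : ℕ, ((List.replicate (n+1) l).flatten).Chain' (adjB A) := by
    intro n
    induction n with
    | zero => simpa using hchain
    | succ n ih =>
      rw [List.replicate_succ, List.flatten_cons]
      refine List.IsChain.append hchain ih ?_
      intro x hx y hy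
      rw [List.getLast?_eq_getLast hne, Option.mem_some_iff] at hx
      rw [hhead n, Option.mem_some_iff] at hy
      rw [hx, hy] at hclose
      exact hclose
  have hmemjoin : ∀ n : ℕ, ∀ x ∈ (List.replicate (n+1) l).flatten, x ∈ l := by
    intro n x hx
    obtain ⟨l', hl', hxl'⟩ := List.mem_flatten.mp hx
    rwa [(List.eq_of_mem_replicate hl')] at hxl'
  have hmem : ∀ n : ℕ, (List.replicate (n+1) l).flatten ∈
      {l' : List (Fin d) | l' ≠ [] ∧ l'.Chain' (adjB A) ∧ ∀ k < l'.length - 1, ¬ rfAt A l' k} := by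
    intro n
    refine ⟨?_, hchainrep n, ?_⟩
    · intro h
      have := hhead n
      rw [h] at this
      simp at this
    · intro k _ hrf
      obtain ⟨h, hrfb⟩ := hrf
      exact hnrf _ (hmemjoin n _ (List.get_mem _ ⟨_, h⟩)) hrfb
  have hlenrep : ∀ n : ℕ, ((List.replicate (n+1) l).flatten).length = (n+1) * l.length := by
    intro n
    simp [List.length_flatten, List.map_replicate, List.sum_replicate, Nat.smul_one_eq_cast]
  have hinj : Function.Injective (fun n : ℕ => (List.replicate (n+1) l).flatten) := by
    intro a b hab
    have hab' : (List.replicate (a+1) l).flatten = (List.replicate (b+1) l).flatten := hab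
    have : (a+1) * l.length = (b+1) * l.length := by
      rw [← hlenrep a, ← hlenrep b, hab']
    have := Nat.eq_of_mul_eq_mul_right hlen this
    omega
  exact (Set.infinite_of_injective_forall_mem hinj hmem) hfin
end

section
/- Let A be a d×d binary matrix in which every cycle passes through a right-free vertex. With P_n the set of based closed walks of length n, Ξ_n ⊆ P_n the subset of those whose unique right-free vertex among positions 1..n is position n, T(Ξ_n) the set of all cyclic rotations of elements of Ξ_n, and L(P_m, Ξ_l) the set obtained from u ∈ P_m and v ∈ Ξ_l by inserting the first l letters of v into u immediately after the first right-free vertex of u: the sets L(P_{n−1}, Ξ_1), L(P_{n−2}, Ξ_2), ..., L(P_1, Ξ_{n−1}), T(Ξ_n) are pairwise disjoint and their union is P_n. -/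
open Matrix Polynomial

/-- `T(Ξ_n)`: all cyclic rotations of the walks in `Ξ_n`. -/
def rotSet {d : ℕ} (A : Fin d → Fin d → Bool) (n : ℕ) : Set (List (Fin d)) :=
  {x | ∃ l, isXiWalk A n l ∧ ∃ i, i < n ∧ x = l.drop i ++ l.take i}

/-- `L(P_m, Ξ_l)`: walks obtained from a based closed walk `u` of length `m` and a
walk `v ∈ Ξ_l` by inserting `v` into `u` immediately after the first right free
vertex of `u` (at 0-based position `s`). -/
def insSet {d : ℕ} (A : Fin d → Fin d → Bool) (m l0 : ℕ) : Set (List (Fin d)) :=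
  {x | ∃ u v s, isClosedWalk A m u ∧ isXiWalk A l0 v ∧ rfAt A u s ∧
    (∀ k < s, ¬ rfAt A u k) ∧ x = u.take (s + 1) ++ v ++ u.drop (s + 1)}

section helpers
variable {d : ℕ} {A : Fin d → Fin d → Bool}

lemma rfB_adj {a b : Fin d} (h : rfB A a) : adjB A a b := h b

lemma rfAt_iff' {l : List (Fin d)} {k : ℕ} :
    rfAt A l k ↔ ∃ a, l[k]? = some a ∧ rfB A a := by
  constructor
  · rintro ⟨h, hr⟩
    exact ⟨l[k], List.getElem?_eq_getElem h, by simpa [List.get_eq_getElem] using hr⟩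
  · rintro ⟨a, ha, hr⟩
    have h : k < l.length := by
      by_contra h
      rw [List.getElem?_eq_none (by omega)] at ha
      cases ha
    refine ⟨h, ?_⟩
    rw [List.getElem?_eq_getElem h, Option.some_inj] at ha
    simpa [List.get_eq_getElem, ha] using hr

lemma rfAt_lt {l : List (Fin d)} {k : ℕ} (h : rfAt A l k) : k < l.length := h.1

lemma chain'_iff' {l : List (Fin d)} :
    l.Chain' (adjB A) ↔ ∀ i a b, l[i]? = some a → l[i+1]? = some b → adjB A a b := by
  show List.IsChain (adjB A) l ↔ _
  rw [List.isChain_iff_getElem]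
  constructor
  · intro h i a b ha hb
    have hb' : i + 1 < l.length := by
      by_contra hh
      rw [List.getElem?_eq_none (by omega)] at hb
      cases hb
    have := h i (by omega)
    rw [List.getElem?_eq_getElem (by omega), Option.some_inj] at ha
    rw [List.getElem?_eq_getElem hb', Option.some_inj] at hb
    simpa [List.get_eq_getElem, ha, hb] using this
  · intro h i hi
    exact h i _ _ (List.getElem?_eq_getElem (by omega)) (List.getElem?_eq_getElem (by omega))

lemma isClosedWalk_iff' {n : ℕ} {x : List (Fin d)} :
    isClosedWalk A n x ↔ x.length = n ∧ 0 < n ∧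
      (∀ i a b, x[i]? = some a → x[i+1]? = some b → adjB A a b) ∧
      (∀ a b, x[n-1]? = some a → x[0]? = some b → adjB A a b) := by
  constructor
  · rintro ⟨hlen, hch, hne, hcl⟩
    subst hlen
    have hpos : 0 < x.length := List.length_pos_iff.mpr hne
    refine ⟨rfl, hpos, chain'_iff'.mp hch, ?_⟩
    intro a b ha hb
    rw [List.getLast_eq_getElem, List.head_eq_getElem] at hcl
    rw [List.getElem?_eq_getElem (by omega), Option.some_inj] at ha
    rw [List.getElem?_eq_getElem (by omega), Option.some_inj] at hb
    rw [← ha, ← hb]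
    exact hcl
  · rintro ⟨hlen, hpos, hch, hcl⟩
    subst hlen
    have hne : x ≠ [] := List.length_pos_iff.mp hpos
    refine ⟨rfl, chain'_iff'.mpr hch, hne, ?_⟩
    rw [List.getLast_eq_getElem, List.head_eq_getElem]
    exact hcl _ _ (List.getElem?_eq_getElem (by omega)) (List.getElem?_eq_getElem (by omega))

end helpers
section ins
variable {d : ℕ} {A : Fin d → Fin d → Bool}

lemma take_len {u : List (Fin d)} {s : ℕ} (hs : s < u.length) :
    (u.take (s+1)).length = s + 1 := by simp; omega

lemma ins_len {u : List (Fin d)} (v : List (Fin d)) {s : ℕ} (hs : s < u.length) :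
    (u.take (s+1) ++ v ++ u.drop (s+1)).length = u.length + v.length := by
  simp; omega

lemma ins_elem_lo {u v : List (Fin d)} {s : ℕ} (hs : s < u.length) {k : ℕ} (hk : k ≤ s) :
    (u.take (s+1) ++ v ++ u.drop (s+1))[k]? = u[k]? := by
  rw [List.getElem?_append, if_pos (by simp [take_len hs]; omega),
    List.getElem?_append, if_pos (by rw [take_len hs]; omega),
    List.getElem?_take, if_pos (by omega)]

lemma ins_elem_mid {u v : List (Fin d)} {s : ℕ} (hs : s < u.length) {j : ℕ} (hj : j < v.length) :
    (u.take (s+1) ++ v ++ u.drop (s+1))[s+1+j]? = v[j]? := by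
  rw [List.getElem?_append, if_pos (by simp [take_len hs]; omega),
    List.getElem?_append_right (by rw [take_len hs]; omega), take_len hs]
  congr 1
  omega

lemma ins_elem_hi {u v : List (Fin d)} {s : ℕ} (hs : s < u.length) {j : ℕ} :
    (u.take (s+1) ++ v ++ u.drop (s+1))[s+1+v.length+j]? = u[s+1+j]? := by
  rw [List.getElem?_append_right (by simp only [List.length_append, take_len hs]; omega), List.getElem?_drop]
  congr 1
  have h2 : (u.take (s+1) ++ v).length = s + 1 + v.length := by simp; omega
  rw [h2]; omega

end ins
section insspec
variable {d : ℕ} {A : Fin d → Fin d → Bool}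

lemma insSet_spec {m l0 : ℕ} {x : List (Fin d)} (hx : x ∈ insSet A m l0) :
    ∃ s, rfAt A x s ∧ (∀ k < s, ¬ rfAt A x k) ∧ rfAt A x (s + l0) ∧
      ∀ k, s < k → k < s + l0 → ¬ rfAt A x k := by
  obtain ⟨u, v, s, hu, hv, hrs, hfirst, rfl⟩ := hx
  have hsu : s < u.length := hrs.1
  have hvlen : v.length = l0 := hv.1.1
  have hvpos : 0 < l0 := by
    obtain ⟨-, -, hne, -⟩ := hv.1
    have := List.length_pos_iff.mpr hne; omega
  refine ⟨s, ?_, ?_, ?_, ?_⟩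
  · rw [rfAt_iff']
    refine ⟨u[s], ?_, ?_⟩
    · rw [ins_elem_lo hsu le_rfl]; exact List.getElem?_eq_getElem hsu
    · obtain ⟨h, hr⟩ := hrs; simpa [List.get_eq_getElem] using hr
  · intro k hk hrf
    rw [rfAt_iff'] at hrf
    obtain ⟨a, ha, hra⟩ := hrf
    rw [ins_elem_lo hsu (by omega)] at ha
    exact hfirst k hk (rfAt_iff'.mpr ⟨a, ha, hra⟩)
  · obtain ⟨a, ha, hra⟩ := rfAt_iff'.mp hv.2.1
    rw [rfAt_iff']
    refine ⟨a, ?_, hra⟩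
    rw [show s + l0 = s + 1 + (l0 - 1) by omega, ins_elem_mid hsu (by omega)]
    exact ha
  · intro k h1 h2 hrf
    obtain ⟨j, rfl⟩ : ∃ j, k = s + 1 + j := ⟨k - s - 1, by omega⟩
    obtain ⟨a, ha, hra⟩ := rfAt_iff'.mp hrf
    rw [ins_elem_mid hsu (by omega)] at ha
    exact hv.2.2 j (by omega) (rfAt_iff'.mpr ⟨a, ha, hra⟩)

lemma insSet_closed {m l0 : ℕ} {x : List (Fin d)} (hx : x ∈ insSet A m l0) :
    isClosedWalk A (m + l0) x := by
  obtain ⟨u, v, s, hu, hv, hrs, hfirst, rfl⟩ := hx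
  have hsu : s < u.length := hrs.1
  have hsrf : rfB A u[s] := by
    obtain ⟨h, hr⟩ := hrs; simpa [List.get_eq_getElem] using hr
  rw [isClosedWalk_iff'] at hu
  obtain ⟨hulen, hmpos, huch, hucl⟩ := hu
  have hv1 := hv.1
  rw [isClosedWalk_iff'] at hv1
  obtain ⟨hvlen, hlpos, hvch, hvcl⟩ := hv1
  obtain ⟨av, hav, hvrf⟩ := rfAt_iff'.mp hv.2.1
  rw [isClosedWalk_iff']
  refine ⟨by rw [ins_len v hsu]; omega, by omega, ?_, ?_⟩
  · intro i a b ha hb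
    rcases lt_trichotomy i s with hi | rfl | hi
    · rw [ins_elem_lo hsu (by omega)] at ha
      rw [ins_elem_lo hsu (by omega)] at hb
      exact huch i a b ha hb
    · rw [ins_elem_lo hsu le_rfl, List.getElem?_eq_getElem hsu, Option.some_inj] at ha
      exact rfB_adj (ha ▸ hsrf)
    · rcases lt_trichotomy i (s + l0) with hi2 | rfl | hi2
      · obtain ⟨j, rfl⟩ : ∃ j, i = s + 1 + j := ⟨i - s - 1, by omega⟩
        rw [ins_elem_mid hsu (by omega)] at ha
        rw [show s + 1 + j + 1 = s + 1 + (j + 1) by omega,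
          ins_elem_mid hsu (by omega)] at hb
        exact hvch j a b ha hb
      · rw [show s + l0 = s + 1 + (l0 - 1) by omega, ins_elem_mid hsu (by omega),
          show l0 - 1 = v.length - 1 by omega] at ha
        rw [show v.length - 1 = l0 - 1 by omega] at ha
        rw [ha] at hav
        cases hav
        exact rfB_adj hvrf
      · obtain ⟨j, rfl⟩ : ∃ j, i = s + 1 + v.length + j := ⟨i - s - 1 - v.length, by omega⟩
        rw [ins_elem_hi hsu] at ha
        rw [show s + 1 + v.length + j + 1 = s + 1 + v.length + (j + 1) by omega,
          ins_elem_hi hsu] at hb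
        exact huch (s + 1 + j) a b ha (by rw [show s+1+j+1 = s+1+(j+1) by omega]; exact hb)
  · intro a b ha hb
    rw [show (0:ℕ) = 0 by rfl] at hb
    rw [ins_elem_lo hsu (by omega)] at hb
    rcases eq_or_lt_of_le (show s + 1 ≤ u.length by omega) with hcase | hcase
    · -- drop empty; last element is v's last, which is rf
      rw [show m + l0 - 1 = s + 1 + (l0 - 1) by omega, ins_elem_mid hsu (by omega)] at ha
      rw [hav, Option.some_inj] at ha
      exact rfB_adj (ha ▸ hvrf)
    · rw [show m + l0 - 1 = s + 1 + v.length + (u.length - s - 2) by omega,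
        ins_elem_hi hsu] at ha
      rw [show s + 1 + (u.length - s - 2) = u.length - 1 by omega] at ha
      rw [hulen] at ha
      exact hucl a b ha hb

end insspec
section rot
variable {d : ℕ} {A : Fin d → Fin d → Bool}

lemma rot_elem_lo {l : List (Fin d)} {i k : ℕ} (hk : k < l.length - i) :
    (l.drop i ++ l.take i)[k]? = l[i+k]? := by
  rw [List.getElem?_append, if_pos (by simp only [List.length_drop]; omega), List.getElem?_drop]

lemma rot_elem_hi {l : List (Fin d)} {i j : ℕ} (hj : j < i) :
    (l.drop i ++ l.take i)[l.length - i + j]? = l[j]? := by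
  rw [List.getElem?_append_right (by simp only [List.length_drop]; omega)]
  simp only [List.length_drop]
  rw [show l.length - i + j - (l.length - i) = j by omega, List.getElem?_take, if_pos hj]

lemma rotSet_spec {n : ℕ} {x : List (Fin d)} (hx : x ∈ rotSet A n) :
    isClosedWalk A n x ∧ ∃ s, rfAt A x s ∧ ∀ k, rfAt A x k → k = s := by
  obtain ⟨l, hl, i, hin, rfl⟩ := hx
  have hlen : l.length = n := hl.1.1
  subst hlen
  have hl1 := hl.1
  rw [isClosedWalk_iff'] at hl1
  obtain ⟨-, hnpos, hch, hcl⟩ := hl1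
  obtain ⟨arf, harf, hrfa⟩ := rfAt_iff'.mp hl.2.1
  constructor
  · rw [isClosedWalk_iff']
    refine ⟨by simp; omega, hnpos, ?_, ?_⟩
    · intro i' a b ha hb
      have hbl : i' + 1 < l.length := by
        by_contra hh
        rw [List.getElem?_eq_none (by simp only [List.length_append,
          List.length_drop, List.length_take]; omega)] at hb
        cases hb
      rcases lt_trichotomy (i'+1) (l.length - i) with h1 | h1 | h1
      · rw [rot_elem_lo (by omega)] at ha
        rw [rot_elem_lo (by omega)] at hb
        refine hch (i + i') a b ha ?_
        rw [show i + i' + 1 = i + (i'+1) by omega]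
        exact hb
      · have hipos : 0 < i := by omega
        rw [rot_elem_lo (by omega)] at ha
        rw [show i + i' = l.length - 1 by omega] at ha
        rw [show i' + 1 = l.length - i + 0 by omega, rot_elem_hi hipos] at hb
        exact hcl a b ha hb
      · obtain ⟨j, rfl⟩ : ∃ j, i' = l.length - i + j := ⟨i' - (l.length - i), by omega⟩
        have hj1 : j + 1 < i := by omega
        rw [rot_elem_hi (by omega)] at ha
        rw [show l.length - i + j + 1 = l.length - i + (j+1) by omega, rot_elem_hi hj1] at hb
        exact hch j a b ha hb
    · intro a b ha hb
      rcases Nat.eq_zero_or_pos i with rfl | hipos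
      · rw [rot_elem_lo (by omega)] at ha
        rw [rot_elem_lo (by omega)] at hb
        rw [Nat.zero_add] at ha hb
        exact hcl a b ha hb
      · rw [show l.length - 1 = l.length - i + (i - 1) by omega, rot_elem_hi (by omega)] at ha
        have h0 : (0:ℕ) < l.length - i := by omega
        rw [rot_elem_lo h0] at hb
        refine hch (i-1) a b ha ?_
        rw [show i - 1 + 1 = i + 0 by omega]
        exact hb
  · refine ⟨l.length - 1 - i, ?_, ?_⟩
    · rw [rfAt_iff']
      refine ⟨arf, ?_, hrfa⟩
      rw [rot_elem_lo (by omega), show i + (l.length - 1 - i) = l.length - 1 by omega]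
      exact harf
    · intro k hk
      have hkl : k < l.length := by
        have := rfAt_lt hk
        simp only [List.length_append, List.length_drop, List.length_take] at this
        omega
      obtain ⟨a, ha, hra⟩ := rfAt_iff'.mp hk
      rcases lt_or_ge k (l.length - i) with h1 | h1
      · rw [rot_elem_lo h1] at ha
        have : i + k = l.length - 1 := by
          by_contra hne
          exact hl.2.2 (i+k) (by omega) (rfAt_iff'.mpr ⟨a, ha, hra⟩)
        omega
      · obtain ⟨j, rfl⟩ : ∃ j, k = l.length - i + j := ⟨k - (l.length - i), by omega⟩
        have hji : j < i := by omega
        rw [rot_elem_hi hji] at ha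
        exact absurd (rfAt_iff'.mpr ⟨a, ha, hra⟩) (hl.2.2 j (by omega))

end rot
section conv
variable {d : ℕ} {A : Fin d → Fin d → Bool}

lemma two_elem_lo {x : List (Fin d)} {s t k : ℕ} (hs : s < x.length) (hk : k ≤ s) :
    (x.take (s+1) ++ x.drop (t+1))[k]? = x[k]? := by
  rw [List.getElem?_append, if_pos (by simp only [List.length_take]; omega),
    List.getElem?_take, if_pos (by omega)]

lemma two_elem_hi {x : List (Fin d)} {s t j : ℕ} (hs : s < x.length) :
    (x.take (s+1) ++ x.drop (t+1))[s+1+j]? = x[t+1+j]? := by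
  rw [List.getElem?_append_right (by simp only [List.length_take]; omega), List.getElem?_drop]
  congr 1
  simp only [List.length_take]
  omega

lemma v_elem {x : List (Fin d)} {s l0 j : ℕ} (hj : j < l0) :
    ((x.drop (s+1)).take l0)[j]? = x[s+1+j]? := by
  rw [List.getElem?_take, if_pos hj, List.getElem?_drop]

lemma mem_insSet_of {n : ℕ} {x : List (Fin d)} {s t : ℕ} (hx : isClosedWalk A n x)
    (hs : rfAt A x s) (hsf : ∀ k < s, ¬ rfAt A x k) (hst : s < t) (ht : rfAt A x t)
    (hbt : ∀ k, s < k → k < t → ¬ rfAt A x k) :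
    x ∈ insSet A (n - (t - s)) (t - s) := by
  rw [isClosedWalk_iff'] at hx
  obtain ⟨hlen, hnpos, hch, hcl⟩ := hx
  subst hlen
  have hsl : s < x.length := rfAt_lt hs
  have htl : t < x.length := rfAt_lt ht
  obtain ⟨as, has, hras⟩ := rfAt_iff'.mp hs
  obtain ⟨at', hat, hrat⟩ := rfAt_iff'.mp ht
  refine ⟨x.take (s+1) ++ x.drop (t+1), (x.drop (s+1)).take (t-s), s, ?_, ?_, ?_, ?_, ?_⟩
  · -- u is a closed walk of length n - (t - s)
    rw [isClosedWalk_iff']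
    refine ⟨by simp only [List.length_append, List.length_take, List.length_drop]; omega,
      by omega, ?_, ?_⟩
    · intro i a b ha hb
      rcases lt_trichotomy i s with hi | rfl | hi
      · rw [two_elem_lo hsl (by omega)] at ha
        rw [two_elem_lo hsl (by omega)] at hb
        exact hch i a b ha hb
      · rw [two_elem_lo hsl le_rfl, has, Option.some_inj] at ha
        exact rfB_adj (ha ▸ hras)
      · obtain ⟨j, rfl⟩ : ∃ j, i = s + 1 + j := ⟨i - s - 1, by omega⟩
        rw [two_elem_hi hsl] at ha
        rw [show s + 1 + j + 1 = s + 1 + (j + 1) by omega, two_elem_hi hsl] at hb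
        refine hch (t+1+j) a b ha ?_
        rw [show t + 1 + j + 1 = t + 1 + (j + 1) by omega]
        exact hb
    · intro a b ha hb
      rw [two_elem_lo hsl (by omega)] at hb
      rcases eq_or_lt_of_le (show t + 1 ≤ x.length by omega) with hcase | hcase
      · rw [show x.length - (t - s) - 1 = s by omega, two_elem_lo hsl le_rfl, has,
          Option.some_inj] at ha
        exact rfB_adj (ha ▸ hras)
      · rw [show x.length - (t - s) - 1 = s + 1 + (x.length - t - 2) by omega,
          two_elem_hi hsl, show t + 1 + (x.length - t - 2) = x.length - 1 by omega] at ha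
        exact hcl a b ha hb
  · -- v is a Xi walk of length t - s
    have hvlen : ((x.drop (s+1)).take (t-s)).length = t - s := by
      simp only [List.length_take, List.length_drop]; omega
    refine ⟨?_, ?_, ?_⟩
    · rw [isClosedWalk_iff']
      refine ⟨hvlen, by omega, ?_, ?_⟩
      · intro j a b ha hb
        have hj1 : j + 1 < t - s := by
          by_contra hh
          rw [List.getElem?_eq_none (by omega)] at hb
          cases hb
        rw [v_elem (by omega)] at ha
        rw [v_elem hj1] at hb
        refine hch (s+1+j) a b ha ?_
        rw [show s + 1 + j + 1 = s + 1 + (j + 1) by omega]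
        exact hb
      · intro a b ha hb
        rw [v_elem (by omega), show s + 1 + (t - s - 1) = t by omega, hat,
          Option.some_inj] at ha
        exact rfB_adj (ha ▸ hrat)
    · rw [rfAt_iff']
      refine ⟨at', ?_, hrat⟩
      rw [v_elem (by omega), show s + 1 + (t - s - 1) = t by omega]
      exact hat
    · intro k hk hrf
      obtain ⟨a, ha, hra⟩ := rfAt_iff'.mp hrf
      rw [v_elem (by omega)] at ha
      exact hbt (s+1+k) (by omega) (by omega) (rfAt_iff'.mpr ⟨a, ha, hra⟩)
  · -- first rf of u at s
    rw [rfAt_iff']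
    refine ⟨as, ?_, hras⟩
    rw [two_elem_lo hsl le_rfl]
    exact has
  · intro k hk hrf
    obtain ⟨a, ha, hra⟩ := rfAt_iff'.mp hrf
    rw [two_elem_lo hsl (by omega)] at ha
    exact hsf k hk (rfAt_iff'.mpr ⟨a, ha, hra⟩)
  · -- reconstruction
    have h1 : (x.take (s+1) ++ x.drop (t+1)).take (s+1) = x.take (s+1) :=
      List.take_left' (take_len hsl)
    have h2 : (x.take (s+1) ++ x.drop (t+1)).drop (s+1) = x.drop (t+1) :=
      List.drop_left' (take_len hsl)
    rw [h1, h2, List.append_assoc]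
    conv_lhs => rw [← List.take_append_drop (s+1) x]
    congr 1
    rw [show x.drop (t+1) = (x.drop (s+1)).drop (t-s) from by
      rw [List.drop_drop]; congr 1; omega]
    rw [List.take_append_drop]

lemma mem_rotSet_of {n : ℕ} {x : List (Fin d)} {s : ℕ} (hx : isClosedWalk A n x)
    (hs : rfAt A x s) (huniq : ∀ k, rfAt A x k → k = s) : x ∈ rotSet A n := by
  rw [isClosedWalk_iff'] at hx
  obtain ⟨hlen, hnpos, hch, hcl⟩ := hx
  subst hlen
  have hsl : s < x.length := rfAt_lt hs
  obtain ⟨as, has, hras⟩ := rfAt_iff'.mp hs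
  have hxlen : (x.drop (s+1) ++ x.take (s+1)).length = x.length := by
    simp only [List.length_append, List.length_drop, List.length_take]; omega
  refine ⟨x.drop (s+1) ++ x.take (s+1), ⟨?_, ?_, ?_⟩, x.length - s - 1, by omega, ?_⟩
  · -- closed walk
    rw [isClosedWalk_iff']
    refine ⟨hxlen, hnpos, ?_, ?_⟩
    · intro i' a b ha hb
      have hbl : i' + 1 < x.length := by
        by_contra hh
        rw [List.getElem?_eq_none (by rw [hxlen]; omega)] at hb
        cases hb
      rcases lt_trichotomy (i'+1) (x.length - (s+1)) with h1 | h1 | h1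
      · rw [rot_elem_lo (by omega)] at ha
        rw [rot_elem_lo (by omega)] at hb
        refine hch (s+1+i') a b ha ?_
        rw [show s + 1 + i' + 1 = s + 1 + (i'+1) by omega]
        exact hb
      · rw [rot_elem_lo (by omega), show s + 1 + i' = x.length - 1 by omega] at ha
        rw [show i' + 1 = x.length - (s+1) + 0 by omega, rot_elem_hi (by omega)] at hb
        exact hcl a b ha hb
      · obtain ⟨j, rfl⟩ : ∃ j, i' = x.length - (s+1) + j := ⟨i' - (x.length - (s+1)), by omega⟩
        have hj1 : j + 1 < s + 1 := by omega
        rw [rot_elem_hi (by omega)] at ha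
        rw [show x.length - (s+1) + j + 1 = x.length - (s+1) + (j+1) by omega,
          rot_elem_hi hj1] at hb
        exact hch j a b ha hb
    · intro a b ha hb
      rw [show x.length - 1 = x.length - (s+1) + s by omega, rot_elem_hi (by omega), has,
        Option.some_inj] at ha
      exact rfB_adj (ha ▸ hras)
  · -- rf at last position
    rw [rfAt_iff']
    refine ⟨as, ?_, hras⟩
    rw [show x.length - 1 = x.length - (s+1) + s by omega, rot_elem_hi (by omega)]
    exact has
  · -- no rf before
    intro k hk hrf
    obtain ⟨a, ha, hra⟩ := rfAt_iff'.mp hrf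
    rcases lt_or_ge k (x.length - (s+1)) with h1 | h1
    · rw [rot_elem_lo h1] at ha
      have := huniq (s+1+k) (rfAt_iff'.mpr ⟨a, ha, hra⟩)
      omega
    · obtain ⟨j, rfl⟩ : ∃ j, k = x.length - (s+1) + j := ⟨k - (x.length - (s+1)), by omega⟩
      have hjs : j < s + 1 := by omega
      rw [rot_elem_hi hjs] at ha
      have := huniq j (rfAt_iff'.mpr ⟨a, ha, hra⟩)
      omega
  · -- reconstruction
    have h1 : (x.drop (s+1) ++ x.take (s+1)).drop (x.length - s - 1) = x.take (s+1) :=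
      List.drop_left' (by simp only [List.length_drop]; omega)
    have h2 : (x.drop (s+1) ++ x.take (s+1)).take (x.length - s - 1) = x.drop (s+1) :=
      List.take_left' (by simp only [List.length_drop]; omega)
    rw [h1, h2, List.take_append_drop]

end conv

/-- **Proposition 3.5.** If every cycle of the digraph of `A` passes
through a right free vertex, then the sets `L(P_{n-1}, Ξ_1), …, L(P_1, Ξ_{n-1})`
and `T(Ξ_n)` are pairwise disjoint and their union is `P_n`. -/
theorem partition_of_closed_walks {d : ℕ} (A : Fin d → Fin d → Bool)
    (hcyc : CyclesHitRF A) (n : ℕ) (hn : 1 ≤ n) :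
    (∀ l₁ l₂ : ℕ, 1 ≤ l₁ → l₁ < n → 1 ≤ l₂ → l₂ < n → l₁ ≠ l₂ →
      Disjoint (insSet A (n - l₁) l₁) (insSet A (n - l₂) l₂)) ∧
    (∀ l₀ : ℕ, 1 ≤ l₀ → l₀ < n → Disjoint (insSet A (n - l₀) l₀) (rotSet A n)) ∧
    ((⋃ l₀ ∈ Finset.Ico 1 n, insSet A (n - l₀) l₀) ∪ rotSet A n
      = {l : List (Fin d) | isClosedWalk A n l}) := by
  
  classical
  refine ⟨?_, ?_, ?_⟩
  · intro l₁ l₂ hl1 hl1n hl2 hl2n hne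
    rw [Set.disjoint_left]
    intro x hx1 hx2
    obtain ⟨s₁, ha1, hb1, hc1, hd1⟩ := insSet_spec hx1
    obtain ⟨s₂, ha2, hb2, hc2, hd2⟩ := insSet_spec hx2
    have hss : s₁ = s₂ := by
      rcases lt_trichotomy s₁ s₂ with h | h | h
      · exact absurd ha1 (hb2 s₁ h)
      · exact h
      · exact absurd ha2 (hb1 s₂ h)
    subst hss
    rcases lt_trichotomy l₁ l₂ with h | h | h
    · exact hd2 (s₁ + l₁) (by omega) (by omega) hc1
    · exact hne h
    · exact hd1 (s₁ + l₂) (by omega) (by omega) hc2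
  · intro l₀ hl0 hl0n
    rw [Set.disjoint_left]
    intro x hx1 hx2
    obtain ⟨s, ha, hb, hc, hd⟩ := insSet_spec hx1
    obtain ⟨-, s', ha', huniq⟩ := rotSet_spec hx2
    have h1 := huniq s ha
    have h2 := huniq (s + l₀) hc
    omega
  · ext x
    simp only [Set.mem_union, Set.mem_iUnion, Set.mem_setOf_eq, Finset.mem_Ico, exists_prop]
    constructor
    · rintro (⟨l₀, ⟨h1, h2⟩, hx⟩ | hx)
      · have := insSet_closed hx
        rwa [show n - l₀ + l₀ = n by omega] at this
      · exact (rotSet_spec hx).1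
    · intro hx
      obtain ⟨k0, hk0⟩ := hcyc x hx.2.1 hx.2.2
      have hex : ∃ k, rfAt A x k := ⟨k0, hk0⟩
      have hs : rfAt A x (Nat.find hex) := Nat.find_spec hex
      have hmin : ∀ k < Nat.find hex, ¬ rfAt A x k := fun k hk => Nat.find_min hex hk
      by_cases h2 : ∃ t, Nat.find hex < t ∧ rfAt A x t
      · left
        obtain ⟨hst, ht⟩ := Nat.find_spec h2
        have hbt : ∀ k, Nat.find hex < k → k < Nat.find h2 → ¬ rfAt A x k := by
          intro k h1' h2' hrf
          exact Nat.find_min h2 h2' ⟨h1', hrf⟩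
        have htn : Nat.find h2 < n := by
          have := rfAt_lt ht
          have := hx.1
          omega
        exact ⟨Nat.find h2 - Nat.find hex, ⟨by omega, by omega⟩,
          mem_insSet_of hx hs hmin hst ht hbt⟩
      · right
        refine mem_rotSet_of hx hs ?_
        intro k hk
        by_contra hne
        rcases lt_or_gt_of_ne hne with h | h
        · exact hmin k h hk
        · exact h2 ⟨k, h, hk⟩
end

section
/- Let ξ_1,...,ξ_d be nonnegative integers with largest real root ρ of x^d − Σ ξ_i x^{d−i}, ρ > 0, and let (η_i), (δ_i), (ι_i), (τ_i) be nonnegative integers with η_i + τ_i = ξ_i and δ_i + ι_i = ξ_i for all i. Form the 2d×2d nonnegative matrix M₁ whose first row interleaves (η_1,τ_1,...,η_d,τ_d), whose second row interleaves (δ_1,ι_1,...,δ_d,ι_d), with ones in positions (i+2,i) for i ≤ 2d−2 and zeros elsewhere. Then the spectral radius of M₁ equals ρ. -/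
open Matrix

private lemma sum_range_two_mul_real (n : ℕ) (f : ℕ → ℝ) :
    ∑ i ∈ Finset.range (2 * n), f i
      = ∑ i ∈ Finset.range n, (f (2 * i) + f (2 * i + 1)) := by
  induction n with
  | zero => simp
  | succ n ih =>
      have h : 2 * (n + 1) = 2 * n + 1 + 1 := by ring
      rw [h, Finset.sum_range_succ, Finset.sum_range_succ, Finset.sum_range_succ, ih]
      ring

private lemma matrix_spectrum_iff {n : Type*} [Fintype n] [DecidableEq n]
    (A : Matrix n n ℂ) (μ : ℂ) :
    μ ∈ spectrum ℂ A ↔ Module.End.HasEigenvalue (Matrix.toLinAlgEquiv' A) μ := by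
  rw [Module.End.hasEigenvalue_iff_mem_spectrum, AlgEquiv.spectrum_eq Matrix.toLinAlgEquiv']

/-- **Case `M₁` of Corollary 5.3.** Let `ρ > 0` be the largest real
root of `x^d − ∑ ξ_i x^{d-i}`, and let `η_i + τ_i = ξ_i`, `δ_i + ι_i = ξ_i`.  The
`2d × 2d` nonnegative matrix `M₁` whose first row interleaves `(η_1, τ_1, …, η_d, τ_d)`,
whose second row interleaves `(δ_1, ι_1, …, δ_d, ι_d)`, with ones in positions
`(i+2, i)` and zeros elsewhere, has spectral radius `ρ`. -/
theorem full_degree_matrix (d : ℕ) (hd : 1 ≤ d) (ξ η τ δ ι : ℕ → ℕ)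
    (hητ : ∀ i, i < d → η i + τ i = ξ i) (hδι : ∀ i, i < d → δ i + ι i = ξ i)
    (ρ : ℝ) (hρpos : 0 < ρ)
    (hρ : IsGreatest {x : ℝ | x ^ d - ∑ i ∈ Finset.range d, (ξ i : ℝ) * x ^ (d - 1 - i) = 0} ρ)
    (M : Matrix (Fin (2 * d)) (Fin (2 * d)) ℝ)
    (hM : ∀ a b : Fin (2 * d), M a b =
      if (a : ℕ) = 0 then
        (if (b : ℕ) % 2 = 0 then (η ((b : ℕ) / 2) : ℝ) else (τ ((b : ℕ) / 2) : ℝ))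
      else if (a : ℕ) = 1 then
        (if (b : ℕ) % 2 = 0 then (δ ((b : ℕ) / 2) : ℝ) else (ι ((b : ℕ) / 2) : ℝ))
      else if (a : ℕ) = (b : ℕ) + 2 then 1 else 0) :
    IsGreatest {r : ℝ | ∃ μ ∈ spectrum ℂ (M.map (Complex.ofReal)), r = ‖μ‖} ρ := by
  have hd2 : 0 < 2 * d := by omega
  -- the positive eigenvector
  set v : Fin (2 * d) → ℝ := fun j => ρ ^ (d - 1 - (j : ℕ) / 2) with hv_def
  have hvpos : ∀ j, 0 < v j := fun j => pow_pos hρpos _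
  -- the root equation
  have hroot : ρ ^ d = ∑ i ∈ Finset.range d, (ξ i : ℝ) * ρ ^ (d - 1 - i) := by
    have := hρ.1
    simp only [Set.mem_setOf_eq] at this
    linarith
  -- row sums for the first two rows
  have hrow : ∀ (p q : ℕ → ℕ), (∀ i, i < d → p i + q i = ξ i) →
      (∑ b : Fin (2 * d),
        (if (b : ℕ) % 2 = 0 then (p ((b : ℕ) / 2) : ℝ) else (q ((b : ℕ) / 2) : ℝ)) * v b)
        = ρ ^ d := by
    intro p q hpq
    have : (∑ b : Fin (2 * d),
        (if (b : ℕ) % 2 = 0 then (p ((b : ℕ) / 2) : ℝ) else (q ((b : ℕ) / 2) : ℝ)) * v b)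
        = ∑ i ∈ Finset.range (2 * d),
          (if i % 2 = 0 then (p (i / 2) : ℝ) else (q (i / 2) : ℝ)) * ρ ^ (d - 1 - i / 2) := by
      rw [Fin.sum_univ_eq_sum_range
        (fun i => (if i % 2 = 0 then (p (i / 2) : ℝ) else (q (i / 2) : ℝ)) * ρ ^ (d - 1 - i / 2))]
    rw [this, sum_range_two_mul_real, hroot]
    apply Finset.sum_congr rfl
    intro i hi
    rw [Finset.mem_range] at hi
    have h1 : (2 * i) % 2 = 0 := by omega
    have h2 : (2 * i + 1) % 2 = 1 := by omega
    have h3 : (2 * i) / 2 = i := by omega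
    have h4 : (2 * i + 1) / 2 = i := by omega
    rw [h1, h2, h3, h4]
    simp only [if_pos rfl]
    rw [if_neg (by omega : ¬ (1 = 0))]
    rw [← hpq i hi]
    push_cast
    ring
  -- M *ᵥ v = ρ • v
  have hMv : M *ᵥ v = ρ • v := by
    funext a
    simp only [mulVec, dotProduct, Pi.smul_apply, smul_eq_mul]
    rcases Nat.lt_or_ge (a : ℕ) 2 with ha | ha
    · -- rows 0 and 1
      interval_cases h : (a : ℕ)
      · have : ∀ b : Fin (2 * d), M a b =
            (if (b : ℕ) % 2 = 0 then (η ((b : ℕ) / 2) : ℝ) else (τ ((b : ℕ) / 2) : ℝ)) := by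
          intro b; rw [hM a b, if_pos h]
        rw [Finset.sum_congr rfl (fun b _ => by rw [this b])]
        rw [hrow η τ hητ]
        have : v a = ρ ^ (d - 1) := by rw [hv_def]; simp [h]
        rw [this, ← pow_succ']
        congr 1
        omega
      · have : ∀ b : Fin (2 * d), M a b =
            (if (b : ℕ) % 2 = 0 then (δ ((b : ℕ) / 2) : ℝ) else (ι ((b : ℕ) / 2) : ℝ)) := by
          intro b; rw [hM a b, if_neg (by omega), if_pos h]
        rw [Finset.sum_congr rfl (fun b _ => by rw [this b])]
        rw [hrow δ ι hδι]
        have : v a = ρ ^ (d - 1) := by rw [hv_def]; simp [h]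
        rw [this, ← pow_succ']
        congr 1
        omega
    · -- shift rows
      have hb0 : ((a : ℕ) - 2) < 2 * d := by omega
      set b0 : Fin (2 * d) := ⟨(a : ℕ) - 2, hb0⟩ with hb0def
      have hsum : ∑ b : Fin (2 * d), M a b * v b = v b0 := by
        rw [Finset.sum_eq_single b0]
        · rw [hM a b0]
          rw [if_neg (by omega), if_neg (by omega), if_pos (by simp [hb0def]; omega)]
          ring
        · intro b _ hb
          rw [hM a b, if_neg (by omega), if_neg (by omega), if_neg, zero_mul]
          intro hab
          apply hb
          apply Fin.ext
          simp [hb0def]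
          omega
        · intro h; exact absurd (Finset.mem_univ b0) h
      rw [hsum]
      have ha2 : (a : ℕ) < 2 * d := a.2
      have e1 : (d - 1 - ((a : ℕ) - 2) / 2) = (d - 1 - (a : ℕ) / 2) + 1 := by omega
      rw [hv_def]
      simp only [hb0def]
      rw [e1, pow_succ]
      ring
  -- nonnegativity of M
  have hMnn : ∀ a b, 0 ≤ M a b := by
    intro a b
    rw [hM a b]
    split_ifs <;> positivity
  -- complex eigenvector
  set A : Matrix (Fin (2 * d)) (Fin (2 * d)) ℂ := M.map Complex.ofReal with hA
  have hAv : A *ᵥ (fun j => (v j : ℂ)) = (ρ : ℂ) • (fun j => (v j : ℂ)) := by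
    funext a
    have := congrFun hMv a
    simp only [mulVec, dotProduct, Pi.smul_apply, smul_eq_mul] at this ⊢
    simp only [hA, Matrix.map_apply]
    exact_mod_cast congrArg Complex.ofReal this
  have hρmem : (ρ : ℂ) ∈ spectrum ℂ A := by
    rw [matrix_spectrum_iff]
    apply Module.End.hasEigenvalue_of_hasEigenvector (x := fun j => (v j : ℂ))
    constructor
    · rw [Module.End.mem_eigenspace_iff, Matrix.toLinAlgEquiv'_apply, hAv]
    · intro h
      have := congrFun h ⟨0, hd2⟩
      simp only [Pi.zero_apply, Complex.ofReal_eq_zero] at this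
      exact absurd this (ne_of_gt (hvpos ⟨0, hd2⟩))
  constructor
  · exact ⟨(ρ : ℂ), hρmem, by simp [abs_of_pos hρpos]⟩
  · rintro r ⟨μ, hμ, rfl⟩
    rw [matrix_spectrum_iff] at hμ
    obtain ⟨w, hw1, hw2⟩ := hμ.exists_hasEigenvector
    rw [Module.End.mem_eigenspace_iff, Matrix.toLinAlgEquiv'_apply] at hw1
    -- choose max of |w j| / v j
    obtain ⟨j0, _, hj0⟩ := Finset.exists_max_image Finset.univ
      (fun j => ‖w j‖ / v j) ⟨⟨0, hd2⟩, Finset.mem_univ _⟩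
    set c : ℝ := ‖w j0‖ / v j0 with hc
    have hcpos : 0 < c := by
      obtain ⟨k, hk⟩ := Function.ne_iff.mp hw2
      have h1 : 0 < ‖w k‖ / v k :=
        div_pos (by simpa using hk) (hvpos k)
      exact lt_of_lt_of_le h1 (hj0 k (Finset.mem_univ k))
    have hwle : ∀ k, ‖w k‖ ≤ c * v k := by
      intro k
      have := hj0 k (Finset.mem_univ k)
      rw [div_le_iff₀ (hvpos k)] at this
      linarith [this]
    have key : ‖μ‖ * (c * v j0) ≤ ρ * (c * v j0) := by
      have h1 : ‖μ‖ * ‖w j0‖ = ‖(A *ᵥ w) j0‖ := by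
        rw [hw1]
        simp [norm_mul]
      have h2 : ‖(A *ᵥ w) j0‖ ≤ ∑ b, M j0 b * ‖w b‖ := by
        simp only [mulVec, dotProduct]
        refine (norm_sum_le _ _).trans ?_
        apply Finset.sum_le_sum
        intro b _
        rw [norm_mul]
        simp only [hA, Matrix.map_apply, Complex.norm_real, Real.norm_eq_abs]
        rw [abs_of_nonneg (hMnn j0 b)]
      have h3 : ∑ b, M j0 b * ‖w b‖ ≤ ∑ b, M j0 b * (c * v b) := by
        apply Finset.sum_le_sum
        intro b _
        exact mul_le_mul_of_nonneg_left (hwle b) (hMnn j0 b)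
      have h4 : ∑ b, M j0 b * (c * v b) = c * (ρ * v j0) := by
        have := congrFun hMv j0
        simp only [mulVec, dotProduct, Pi.smul_apply, smul_eq_mul] at this
        calc ∑ b, M j0 b * (c * v b) = c * ∑ b, M j0 b * v b := by
              rw [Finset.mul_sum]; apply Finset.sum_congr rfl; intro b _; ring
          _ = c * (ρ * v j0) := by rw [this]
      have h5 : ‖w j0‖ = c * v j0 := by
        rw [hc, div_mul_cancel₀]
        exact ne_of_gt (hvpos j0)
      calc ‖μ‖ * (c * v j0) = ‖μ‖ * ‖w j0‖ := by rw [h5]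
        _ = ‖(A *ᵥ w) j0‖ := h1
        _ ≤ ∑ b, M j0 b * ‖w b‖ := h2
        _ ≤ ∑ b, M j0 b * (c * v b) := h3
        _ = c * (ρ * v j0) := h4
        _ = ρ * (c * v j0) := by ring
    have hpos : 0 < c * v j0 := mul_pos hcpos (hvpos j0)
    exact le_of_mul_le_mul_right key hpos
end
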